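/- arXiv:2107.05369 — 2 statements merged into one kernel-verified Lean document; each statement's English description precedes it below -/
import Mathlib

section
/- Let Q(x̄) = (O, Σ, q) be an OMQ where O is a possibly infinite set of frontier-one TGDs with bodies of treewidth (ℓ,k) (1 ≤ ℓ < k) and q is a CQ of treewidth (ℓ,k). Then for every Σ-database D and every tuple ā over adom(D), ā is a certain answer to Q on D if and only if ā is a certain answer to Q on the (ℓ,k)-unraveling D≈_{ā,ℓ,k} of D up to ā. -/
set_option autoImplicit false

attribute [local instance] Classical.propDecidable

/-! ### Interpretations, databases, homomorphisms -/

structure Interp (C R A : Type) where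
  cn : C → A → Prop
  rn : R → A → A → Prop

namespace Interp

variable {C R A : Type}

/-- The active domain of an interpretation/database. -/
def adom (I : Interp C R A) : Set A :=
  {a | (∃ c, I.cn c a) ∨ (∃ r b, I.rn r a b) ∨ (∃ r b, I.rn r b a)}

/-- An interpretation has finitely many facts (this is what makes it a database). -/
def FiniteFacts (I : Interp C R A) : Prop :=
  {p : C × A | I.cn p.1 p.2}.Finite ∧ {t : R × A × A | I.rn t.1 t.2.1 t.2.2}.Finite

/-- All facts use only symbols from the signature `(SC, SR)`. -/
def InSig (I : Interp C R A) (SC : Set C) (SR : Set R) : Prop :=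
  (∀ c a, I.cn c a → c ∈ SC) ∧ (∀ r a b, I.rn r a b → r ∈ SR)

/-- Restriction of an interpretation to a set of elements. -/
def restrict (I : Interp C R A) (s : Set A) : Interp C R A where
  cn c a := a ∈ s ∧ I.cn c a
  rn r a b := a ∈ s ∧ b ∈ s ∧ I.rn r a b

/-- Semantics of (possibly inverse) roles: `Sum.inl r` is `r`, `Sum.inr r` is `r⁻`. -/
def roleE (I : Interp C R A) : R ⊕ R → A → A → Prop
  | .inl r, a, b => I.rn r a b
  | .inr r, a, b => I.rn r b a

/-- The undirected graph underlying an interpretation. -/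
def graphOf (I : Interp C R A) : SimpleGraph A where
  Adj a b := a ≠ b ∧ ∃ r, I.rn r a b ∨ I.rn r b a
  symm := by constructor; rintro a b ⟨hne, r, hr⟩; exact ⟨hne.symm, r, hr.symm⟩
  loopless := by constructor; rintro a ⟨hne, -⟩; exact hne rfl

/-- A database/interpretation is a tree: the underlying graph is acyclic,
there are no self loops and no multi-edges (trees need not be connected). -/
def IsTree (I : Interp C R A) : Prop :=
  I.graphOf.IsAcyclic ∧ (∀ r a, ¬ I.rn r a a) ∧
    (∀ (ρ₁ ρ₂ : R ⊕ R) (a b : A), ρ₁ ≠ ρ₂ → I.roleE ρ₁ a b → ¬ I.roleE ρ₂ a b)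

end Interp

/-- Homomorphisms between interpretations. -/
structure Hom {C R A B : Type} (I : Interp C R A) (J : Interp C R B) where
  toFun : A → B
  map_cn : ∀ c a, I.cn c a → J.cn c (toFun a)
  map_rn : ∀ r a b, I.rn r a b → J.rn r (toFun a) (toFun b)

/-! ### Tree decompositions and treewidth -/

/-- An `(ℓ,k)`-tree decomposition of an interpretation: an undirected tree `(V,G)`
with bags of size at most `k`, pairwise overlaps of size at most `ℓ`, every active
element appearing in a nonempty connected set of bags, and every role edge
contained in some bag. -/
structure TreeDecomp {C R A : Type} (I : Interp C R A) (ℓ k : ℕ) where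
  V : Type
  G : SimpleGraph V
  conn : G.Connected
  acyc : G.IsAcyclic
  bag : V → Set A
  cover : ∀ a ∈ I.adom, (G.induce {v | a ∈ bag v}).Connected
  edges : ∀ r a b, I.rn r a b → ∃ v, a ∈ bag v ∧ b ∈ bag v
  bagFin : ∀ v, (bag v).Finite
  bagCard : ∀ v, (bag v).ncard ≤ k
  overlap : ∀ v w, v ≠ w → (bag v ∩ bag w).ncard ≤ ℓ

/-- `I` has treewidth `(ℓ,k)`. -/
def HasTW {C R A : Type} (I : Interp C R A) (ℓ k : ℕ) : Prop :=
  Nonempty (TreeDecomp I ℓ k)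

/-! ### Conjunctive queries and UCQs -/

/-- A conjunctive query with `m` answer variables (`Fin m`) and quantified
variables `V`. -/
structure CQ (C R : Type) (m : ℕ) where
  V : Type
  cnAtoms : Set (C × (Fin m ⊕ V))
  rnAtoms : Set (R × (Fin m ⊕ V) × (Fin m ⊕ V))

namespace CQ

variable {C R A : Type} {m : ℕ}

/-- `I ⊨ q(atup)`. -/
def Eval (q : CQ C R m) (I : Interp C R A) (atup : Fin m → A) : Prop :=
  ∃ h : Fin m ⊕ q.V → A, (∀ i, h (.inl i) = atup i) ∧
    (∀ p ∈ q.cnAtoms, I.cn p.1 (h p.2)) ∧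
    (∀ t ∈ q.rnAtoms, I.rn t.1 (h t.2.1) (h t.2.2))

/-- The canonical database of a CQ (all variables as constants). -/
def canon (q : CQ C R m) : Interp C R (Fin m ⊕ q.V) where
  cn c x := (c, x) ∈ q.cnAtoms
  rn r x y := (r, x, y) ∈ q.rnAtoms

/-- The treewidth of a CQ: the treewidth of its canonical database restricted to
the quantified variables (answer variables do not contribute). -/
def HasTWq (q : CQ C R m) (ℓ k : ℕ) : Prop :=
  HasTW (q.canon.restrict (Set.range Sum.inr)) ℓ k

end CQ

/-- A union of conjunctive queries, as an indexed family of CQs of the same arity. -/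
structure UCQ (C R : Type) (m : ℕ) where
  ι : Type
  d : ι → CQ C R m

def UCQ.Eval {C R A : Type} {m : ℕ} (q : UCQ C R m) (I : Interp C R A)
    (atup : Fin m → A) : Prop :=
  ∃ i, (q.d i).Eval I atup

/-! ### Certain answers (generic in the ontology semantics) -/

/-- `atup` is a certain answer on `D` for query semantics `Ev`, w.r.t. all
(nonempty) models satisfying `Mod`: under the standard-names-free reading,
models of `D` are interpretations together with a homomorphism from `D`. -/
def Certain {C R A : Type} {m : ℕ} (Mod : ∀ Δ : Type, Interp C R Δ → Prop)
    (D : Interp C R A) (Ev : ∀ Δ : Type, Interp C R Δ → (Fin m → Δ) → Prop)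
    (atup : Fin m → A) : Prop :=
  ∀ (Δ : Type), Nonempty Δ → ∀ I : Interp C R Δ, Mod Δ I →
    ∀ h : Hom D I, Ev Δ I (fun i => h.toFun (atup i))

/-- `D` is satisfiable w.r.t. the class of models described by `Mod`. -/
def Satisfiable {C R A : Type} (Mod : ∀ Δ : Type, Interp C R Δ → Prop)
    (D : Interp C R A) : Prop :=
  ∃ (Δ : Type) (_ : Nonempty Δ) (I : Interp C R Δ), Nonempty (Hom D I) ∧ Mod Δ I

/-! ### First-order logic (no equality, no constants) -/

inductive FO (C R : Type) : ℕ → Type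
  | cn {n : ℕ} (c : C) (i : Fin n) : FO C R n
  | rn {n : ℕ} (r : R) (i j : Fin n) : FO C R n
  | fls {n : ℕ} : FO C R n
  | imp {n : ℕ} (φ ψ : FO C R n) : FO C R n
  | all {n : ℕ} (φ : FO C R (n+1)) : FO C R n

def FO.Eval {C R A : Type} (I : Interp C R A) : {n : ℕ} → FO C R n → (Fin n → A) → Prop
  | _, .cn c i, v => I.cn c (v i)
  | _, .rn r i j, v => I.rn r (v i) (v j)
  | _, .fls, _ => False
  | _, .imp φ ψ, v => φ.Eval I v → ψ.Eval I v
  | _, .all φ, v => ∀ a, φ.Eval I (Fin.cons a v)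

/-- `I` is a model of the FO ontology `O`. -/
def ModelsFO {C R A : Type} (I : Interp C R A) (O : Set (FO C R 0)) : Prop :=
  ∀ φ ∈ O, φ.Eval I (fun i => i.elim0)

/-- `O ⊨ O'` for FO ontologies. -/
def FOEntails {C R : Type} (O O' : Set (FO C R 0)) : Prop :=
  ∀ (Δ : Type), Nonempty Δ → ∀ I : Interp C R Δ, ModelsFO I O → ModelsFO I O'

/-! ### Tuple-generating dependencies -/

/-- A TGD with `n` frontier variables, whose body and head are CQs with the
frontier variables as answer variables; `head = none` stands for `⊥`. -/
structure TGD (C R : Type) where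
  n : ℕ
  body : CQ C R n
  head : Option (CQ C R n)

def TGD.Sat {C R A : Type} (t : TGD C R) (I : Interp C R A) : Prop :=
  ∀ v : Fin t.n → A, t.body.Eval I v →
    match t.head with
    | some ψ => ψ.Eval I v
    | none => False

def ModelsTGDSet {C R A : Type} (I : Interp C R A) (O : Set (TGD C R)) : Prop :=
  ∀ t ∈ O, t.Sat I

/-! ### Description logic concepts -/

/-- `ELIU` concepts with ⊥, possibly disjunction and the universal role. -/
inductive ELIU (C R : Type) : Type
  | top
  | bot
  | cn (c : C)
  | inter (X Y : ELIU C R)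
  | union (X Y : ELIU C R)
  | exR (ρ : R ⊕ R) (X : ELIU C R)
  | exU (X : ELIU C R)

namespace ELIU

variable {C R A : Type}

def sem (I : Interp C R A) : ELIU C R → A → Prop
  | .top, _ => True
  | .bot, _ => False
  | .cn c, a => I.cn c a
  | .inter X Y, a => X.sem I a ∧ Y.sem I a
  | .union X Y, a => X.sem I a ∨ Y.sem I a
  | .exR ρ X, a => ∃ b, I.roleE ρ a b ∧ X.sem I b
  | .exU X, _ => ∃ b, X.sem I b

def uFree : ELIU C R → Prop
  | .top => True
  | .bot => True
  | .cn _ => True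
  | .inter X Y => X.uFree ∧ Y.uFree
  | .union X Y => X.uFree ∧ Y.uFree
  | .exR _ X => X.uFree
  | .exU _ => False

def disjFree : ELIU C R → Prop
  | .top => True
  | .bot => True
  | .cn _ => True
  | .inter X Y => X.disjFree ∧ Y.disjFree
  | .union _ _ => False
  | .exR _ X => X.disjFree
  | .exU X => X.disjFree

def botFree : ELIU C R → Prop
  | .top => True
  | .bot => False
  | .cn _ => True
  | .inter X Y => X.botFree ∧ Y.botFree
  | .union X Y => X.botFree ∧ Y.botFree
  | .exR _ X => X.botFree
  | .exU X => X.botFree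

end ELIU

/-- A concept inclusion is an `ELI_⊥` CI (no disjunction, no universal role). -/
def ELIbotCI {C R : Type} (p : ELIU C R × ELIU C R) : Prop :=
  p.1.disjFree ∧ p.1.uFree ∧ p.2.disjFree ∧ p.2.uFree

/-- A concept inclusion is an `ELI` CI. -/
def ELICI {C R : Type} (p : ELIU C R × ELIU C R) : Prop :=
  ELIbotCI p ∧ p.1.botFree ∧ p.2.botFree

def ModelsELIUOnt {C R A : Type} (I : Interp C R A)
    (T : Set (ELIU C R × ELIU C R)) : Prop :=
  ∀ p ∈ T, ∀ a, p.1.sem I a → p.2.sem I a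

def EntailsELIU {C R : Type} (T T' : Set (ELIU C R × ELIU C R)) : Prop :=
  ∀ (Δ : Type), Nonempty Δ → ∀ I : Interp C R Δ, ModelsELIUOnt I T → ModelsELIUOnt I T'

/-- `ALCI` concepts. -/
inductive ALCI (C R : Type) : Type
  | top
  | cn (c : C)
  | neg (X : ALCI C R)
  | inter (X Y : ALCI C R)
  | exR (ρ : R ⊕ R) (X : ALCI C R)

namespace ALCI

variable {C R A : Type}

def sem (I : Interp C R A) : ALCI C R → A → Prop
  | .top, _ => True
  | .cn c, a => I.cn c a
  | .neg X, a => ¬ X.sem I a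
  | .inter X Y, a => X.sem I a ∧ Y.sem I a
  | .exR ρ X, a => ∃ b, I.roleE ρ a b ∧ X.sem I b

/-- `C ⊔ D` as an abbreviation. -/
def unionA (X Y : ALCI C R) : ALCI C R := .neg (.inter (.neg X) (.neg Y))

/-- `∀r.C` as an abbreviation. -/
def allR (r : R) (X : ALCI C R) : ALCI C R := .neg (.exR (.inl r) (.neg X))

/-- `∃rⁿ.C` (n-fold nesting). -/
def exPow (r : R) : ℕ → ALCI C R → ALCI C R
  | 0, X => X
  | n+1, X => .exR (.inl r) (exPow r n X)

end ALCI

def ModelsALCIOnt {C R A : Type} (I : Interp C R A)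
    (O : Set (ALCI C R × ALCI C R)) : Prop :=
  ∀ p ∈ O, ∀ a, p.1.sem I a → p.2.sem I a

def EntailsALCI {C R : Type} (O O' : Set (ALCI C R × ALCI C R)) : Prop :=
  ∀ (Δ : Type), Nonempty Δ → ∀ I : Interp C R Δ, ModelsALCIOnt I O → ModelsALCIOnt I O'

/-- The set `O≈` of all `ELI^u_⊥` concept inclusions entailed by the ALCI
ontology `O`. -/
def ELIuApprox {C R : Type} (O : Set (ALCI C R × ALCI C R)) :
    Set (ELIU C R × ELIU C R) :=
  {p | p.1.disjFree ∧ p.2.disjFree ∧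
    ∀ (Δ : Type), Nonempty Δ → ∀ I : Interp C R Δ, ModelsALCIOnt I O →
      ∀ a, p.1.sem I a → p.2.sem I a}

/-! ### bELIQs -/

/-- A bELIQ: either an ELIQ `C(x)` (unary) or a Boolean ELIQ `∃u.C`. -/
inductive BELIQ (C R : Type) : Type
  | q1 (X : ELIU C R)
  | q0 (X : ELIU C R)

namespace BELIQ

variable {C R A : Type}

def arity : BELIQ C R → ℕ
  | .q1 _ => 1
  | .q0 _ => 0

/-- Well-formedness: the underlying concept is an `ELI` concept. -/
def wf : BELIQ C R → Prop
  | .q1 X => X.disjFree ∧ X.uFree ∧ X.botFree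
  | .q0 X => X.disjFree ∧ X.uFree ∧ X.botFree

def Eval : (q : BELIQ C R) → Interp C R A → (Fin q.arity → A) → Prop
  | .q1 X, I, v => X.sem I (v ⟨0, Nat.zero_lt_one⟩)
  | .q0 X, I, _ => ∃ a, X.sem I a

end BELIQ

/-! ### Tree unraveling -/

/-- Paths in a database, indexed by their tail. -/
inductive UPath {C R A : Type} (I : Interp C R A) : A → Type
  | nil (a : A) : UPath I a
  | cons {a : A} (p : UPath I a) (ρ : R ⊕ R) (b : A) (h : I.roleE ρ a b) : UPath I b

/-- The tree unraveling `D≈_S` of `D` at `S`: it contains all facts of `D|_S`,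
the facts along paths, and the connecting facts between `S` and paths. -/
def treeUnravel {C R A : Type} (D : Interp C R A) (S : Set A) :
    Interp C R (A ⊕ (Σ a : A, UPath D a)) where
  cn c x :=
    match x with
    | .inl a => a ∈ S ∧ D.cn c a
    | .inr p => D.cn c p.1
  rn r x y :=
    (∃ a b, a ∈ S ∧ b ∈ S ∧ D.rn r a b ∧ x = .inl a ∧ y = .inl b) ∨
    (∃ (a : A) (p : UPath D a) (b : A) (h : D.roleE (.inl r) a b),
        x = .inr ⟨a, p⟩ ∧ y = .inr ⟨b, p.cons (.inl r) b h⟩) ∨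
    (∃ (a : A) (p : UPath D a) (b : A) (h : D.roleE (.inr r) a b),
        y = .inr ⟨a, p⟩ ∧ x = .inr ⟨b, p.cons (.inr r) b h⟩) ∨
    (∃ (a b : A) (p : UPath D b), a ∈ S ∧ D.rn r a b ∧ x = .inl a ∧ y = .inr ⟨b, p⟩) ∨
    (∃ (a b : A) (p : UPath D b), a ∈ S ∧ D.rn r b a ∧ x = .inr ⟨b, p⟩ ∧ y = .inl a)

/-! ### (ℓ,k)-unraveling -/

/-- Admissibility of a bag `T` in an `(ℓ,k)`-sequence: `S ⊆ T ⊆ adom(D)` and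
`|T \ S| ≤ k`. -/
def SeqOk {C R A : Type} (D : Interp C R A) (S : Set A) (k : ℕ) (T : Set A) : Prop :=
  S ⊆ T ∧ T ⊆ D.adom ∧ (T \ S).Finite ∧ (T \ S).ncard ≤ k

/-- `(ℓ,k)`-sequences `S₀,O₀,S₁,…,Sₙ`, indexed by the last bag `Sₙ`. -/
inductive LKSeq {C R A : Type} (D : Interp C R A) (S : Set A) (ℓ k : ℕ) : Set A → Type
  | first (S₀ : Set A) (h : SeqOk D S k S₀) : LKSeq D S ℓ k S₀
  | step {T : Set A} (v : LKSeq D S ℓ k T) (O T' : Set A)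
      (hO : S ⊆ O) (hOT : O ⊆ T ∩ T') (hOf : (O \ S).Finite)
      (hOl : (O \ S).ncard ≤ ℓ) (hT' : SeqOk D S k T') : LKSeq D S ℓ k T'

/-- Elements of the `(ℓ,k)`-unraveling: elements of `S` keep their names
(`Sum.inl`), all other copies are identified by the sequence at which they are
introduced. -/
abbrev LKElem {C R A : Type} (D : Interp C R A) (S : Set A) (ℓ k : ℕ) : Type :=
  A ⊕ (Σ T : Set A, LKSeq D S ℓ k T × A)

/-- The copy `a_v` of `a` in the bag of the sequence `v`. -/
noncomputable def LKSeq.rep {C R A : Type} {D : Interp C R A} {S : Set A} {ℓ k : ℕ} :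
    {T : Set A} → LKSeq D S ℓ k T → A → LKElem D S ℓ k
  | _, .first S₀ h, a =>
      if a ∈ S then Sum.inl a else Sum.inr ⟨S₀, (LKSeq.first S₀ h, a)⟩
  | _, .step v O T' h1 h2 h3 h4 h5, a =>
      if a ∈ S then Sum.inl a
      else if a ∈ O then v.rep a
      else Sum.inr ⟨T', (LKSeq.step v O T' h1 h2 h3 h4 h5, a)⟩

/-- The `(ℓ,k)`-unraveling `D≈_{S,ℓ,k}` of `D` up to `S`. -/
noncomputable def unravelLK {C R A : Type} (D : Interp C R A) (S : Set A) (ℓ k : ℕ) :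
    Interp C R (LKElem D S ℓ k) where
  cn c x := ∃ (T : Set A) (v : LKSeq D S ℓ k T) (a : A),
      a ∈ T ∧ x = v.rep a ∧ D.cn c a
  rn r x y := ∃ (T : Set A) (v : LKSeq D S ℓ k T) (a b : A),
      a ∈ T ∧ b ∈ T ∧ x = v.rep a ∧ y = v.rep b ∧ D.rn r a b

/-- The uncopying map. -/
def uncopyLK {C R A : Type} {D : Interp C R A} {S : Set A} {ℓ k : ℕ} :
    LKElem D S ℓ k → A
  | .inl a => a
  | .inr x => x.2.2

/-- `x` is a copy of `a` in the `(ℓ,k)`-unraveling. -/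
def IsCopyLK {C R A : Type} {D : Interp C R A} {S : Set A} {ℓ k : ℕ}
    (x : LKElem D S ℓ k) (a : A) : Prop :=
  ∃ (T : Set A) (v : LKSeq D S ℓ k T), a ∈ T ∧ x = v.rep a

/-- The frontier-one `ℓ,k,ℓ',k'`-TGDs entailed by the ALCI ontology `O`. -/
def approxTGDs {C R : Type} (O : Set (ALCI C R × ALCI C R)) (ℓ k ℓ' k' : ℕ) :
    Set (TGD C R) :=
  {t | t.n ≤ 1 ∧ HasTW t.body.canon ℓ k ∧
       (∀ ψ, t.head = some ψ → HasTW ψ.canon ℓ' k') ∧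
       ∀ (Δ : Type), Nonempty Δ → ∀ I : Interp C R Δ, ModelsALCIOnt I O → t.Sat I}

/-! ### The disjunct operation f and the approximation set E_O -/

def fDisj {C R : Type} : ELIU C R → Set (ELIU C R)
  | .top => {ELIU.top}
  | .bot => {ELIU.bot}
  | .cn c => {ELIU.cn c}
  | .inter X Y => {Z | ∃ X' ∈ fDisj X, ∃ Y' ∈ fDisj Y, Z = ELIU.inter X' Y'}
  | .union X Y => fDisj X ∪ fDisj Y
  | .exR ρ X => {Z | ∃ X' ∈ fDisj X, Z = ELIU.exR ρ X'}
  | .exU X => {Z | ∃ X' ∈ fDisj X, Z = ELIU.exU X'}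

/-- The rewriting of `O` replacing each `C ⊑ D` by `{C' ⊑ D : C' ∈ f(C)}`. -/
def rewriteO {C R : Type} (O : Set (ELIU C R × ELIU C R)) :
    Set (ELIU C R × ELIU C R) :=
  {p | ∃ q ∈ O, p.2 = q.2 ∧ p.1 ∈ fDisj q.1}

/-- `E_O`: all ontologies obtained by choosing, for each inclusion `C' ⊑ D` of
the rewriting, one inclusion `C' ⊑ D'` with `D' ∈ f(D)`. -/
def EO {C R : Type} (O : Set (ELIU C R × ELIU C R)) :
    Set (Set (ELIU C R × ELIU C R)) :=
  {Oh | ∃ g : ELIU C R × ELIU C R → ELIU C R,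
      (∀ p ∈ rewriteO O, g p ∈ fDisj p.2) ∧
      Oh = {q | ∃ p ∈ rewriteO O, q = (p.1, g p)}}

/-! ### Direct products -/

def prodInterp {C R : Type} {n : ℕ} {A : Fin n → Type}
    (I : ∀ i, Interp C R (A i)) : Interp C R (∀ i, A i) where
  cn c f := ∀ i, (I i).cn c (f i)
  rn r f g := ∀ i, (I i).rn r (f i) (g i)

/-! ### Concrete databases and queries for specific statements -/

/-- The grid CQ `q_m` of Statement 16, as its canonical database. -/
def gridDB {C R : Type} (m : ℕ) (r : R) (Aname : Fin m × Fin m → C) :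
    Interp C R (Fin m × Fin m) where
  cn c p := c = Aname p
  rn ρ p q := ρ = r ∧ Even (p.1.1 + p.2.1) ∧
    ((p.1.1 : ℤ) - (q.1.1 : ℤ)).natAbs + ((p.2.1 : ℤ) - (q.2.1 : ℤ)).natAbs = 1

/-- The 3-cycle database of Statement 19. -/
def cycleDB {C R : Type} (nA : Fin 3 → C) (r : R) : Interp C R (Fin 3) where
  cn c i := c = nA i
  rn ρ i j := ρ = r ∧ j = i + 1

/-- The ontology `{Aᵢ ⊓ Aⱼ ⊑ B : 1 ≤ i < j ≤ 3}` of Statement 19. -/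
def cycleOnt {C R : Type} (nA : Fin 3 → C) (nB : C) : Set (ELIU C R × ELIU C R) :=
  {p | ∃ i j : Fin 3, i < j ∧
    p = (ELIU.inter (ELIU.cn (nA i)) (ELIU.cn (nA j)), ELIU.cn nB)}

/-- The Boolean CQ `∃x B(x)` of Statement 19. -/
def existsB {C R : Type} (nB : C) : CQ C R 0 where
  V := Unit
  cnAtoms := {(nB, Sum.inr ())}
  rnAtoms := ∅

/-- The ontology `O = {∃r.⊤ ⊓ ∀r.A ⊑ B₁ ⊔ B₂}` of Statement 14. -/
def O14 {C R : Type} (a b1 b2 : C) (r : R) : Set (ALCI C R × ALCI C R) :=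
  {(ALCI.inter (ALCI.exR (.inl r) ALCI.top) (ALCI.allR r (ALCI.cn a)),
    ALCI.unionA (ALCI.cn b1) (ALCI.cn b2))}

/-- The ontology `O_n` of Statement 14. -/
def O14n {C R : Type} (a b1 x : C) (r : R) (n : ℕ) : Set (ALCI C R × ALCI C R) :=
  {(ALCI.exR (.inl r) (ALCI.cn a), ALCI.exPow r n (ALCI.cn x)),
   (ALCI.exR (.inl r) (ALCI.inter (ALCI.cn a) (ALCI.exPow r (n-1) (ALCI.cn x))),
    ALCI.cn b1)}

/-! ### Auxiliary development for Statement 7 -/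

namespace Stmt7

open Classical

variable {C R A : Type} {D : Interp C R A} {S : Set A} {l k : ℕ}

lemma seq_S_sub {T : Set A} (v : LKSeq D S l k T) : S ⊆ T := by
  cases v with
  | first S₀ h => exact h.1
  | step v O T' h1 h2 h3 h4 h5 => exact h5.1

lemma seq_sub_adom {T : Set A} (v : LKSeq D S l k T) : T ⊆ D.adom := by
  cases v with
  | first S₀ h => exact h.2.1
  | step v O T' h1 h2 h3 h4 h5 => exact h5.2.1

lemma rep_S {T : Set A} (v : LKSeq D S l k T) {a : A} (ha : a ∈ S) :
    v.rep a = Sum.inl a := by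
  cases v <;> simp [LKSeq.rep, ha]

lemma uncopy_rep : ∀ {T : Set A} (v : LKSeq D S l k T) (a : A),
    uncopyLK (v.rep a) = a := by
  intro T v
  induction v with
  | first S₀ h =>
    intro a; by_cases ha : a ∈ S <;> simp [LKSeq.rep, ha, uncopyLK]
  | step v O T' h1 h2 h3 h4 h5 ih =>
    intro a
    by_cases ha : a ∈ S
    · simp [LKSeq.rep, ha, uncopyLK]
    · by_cases hO : a ∈ O
      · simp only [LKSeq.rep, if_neg ha, if_pos hO]; exact ih a
      · simp [LKSeq.rep, ha, hO, uncopyLK]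

lemma isCopy_rep {T : Set A} (v : LKSeq D S l k T) {a : A} (ha : a ∈ T) :
    IsCopyLK (v.rep a) a := ⟨T, v, ha, rfl⟩

lemma seqOk_S (hS : S ⊆ D.adom) : SeqOk D S k S :=
  ⟨subset_rfl, hS, by simp, by simp⟩

lemma isCopy_inl (hS : S ⊆ D.adom) {a : A} (ha : a ∈ S) :
    IsCopyLK (D := D) (S := S) (ℓ := l) (k := k) (Sum.inl a) a := by
  have := isCopy_rep (LKSeq.first (D := D) (ℓ := l) (k := k) S (seqOk_S hS)) ha
  rwa [rep_S _ ha] at this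

/-- The uncopying homomorphism. -/
def uncopyHom (D : Interp C R A) (S : Set A) (l k : ℕ) :
    Hom (unravelLK D S l k) D where
  toFun := uncopyLK
  map_cn := by
    rintro c x ⟨T, v, a, hT, rfl, hc⟩
    rwa [uncopy_rep]
  map_rn := by
    rintro r x y ⟨T, v, a, b, ha, hb, rfl, rfl, hr⟩
    rw [uncopy_rep, uncopy_rep]; exact hr

/-- Elements of the guided model. -/
abbrev Om (D : Interp C R A) (S : Set A) (l k : ℕ) (Δ : Type) : Type :=
  {a : A // a ∈ D.adom} ⊕ ({a : A // a ∈ D.adom} × (LKElem D S l k → Δ)) ⊕ Δ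

/-- The anchor of an element of the guided model. -/
def anc {Δ : Type} : Om D S l k Δ → Option A
  | .inl a => some a.1
  | .inr (.inl (a, _)) => some a.1
  | .inr (.inr _) => none

lemma anc_adom {Δ : Type} {e : Om D S l k Δ} {a : A} (h : anc e = some a) :
    a ∈ D.adom := by
  rcases e with a' | ⟨a', φ⟩ | δ
  · cases Option.some.inj h; exact a'.2
  · cases Option.some.inj h; exact a'.2
  · exact absurd h (by simp [anc])

section Guided

variable {Δ : Type} {I : Interp C R Δ}

lemma copy_cn {g : Hom (unravelLK D S l k) I} {x : LKElem D S l k} {a : A}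
    (hx : IsCopyLK x a) {c : C} (hc : D.cn c a) : I.cn c (g.toFun x) := by
  obtain ⟨T, v, hT, rfl⟩ := hx
  exact g.map_cn _ _ ⟨T, v, a, hT, rfl, hc⟩

lemma seq_rn {g : Hom (unravelLK D S l k) I} {T : Set A} (v : LKSeq D S l k T)
    {a b : A} (ha : a ∈ T) (hb : b ∈ T)
    {r : R} (h : D.rn r a b) : I.rn r (g.toFun (v.rep a)) (g.toFun (v.rep b)) :=
  g.map_rn _ _ _ ⟨T, v, a, b, ha, hb, rfl, rfl, h⟩

variable (g : Hom (unravelLK D S l k) I)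

/-- The value of a guided-model element at a copy. -/
def gval : Om D S l k Δ → LKElem D S l k → Δ
  | .inl _, x => g.toFun x
  | .inr (.inl (_, φ)), x => φ x
  | .inr (.inr δ), _ => δ

/-- The guided model: a model of the ontology containing `D`, built from a
model `I` of the unraveling. -/
def guided : Interp C R (Om D S l k Δ) where
  cn c e := match e with
    | .inl a => ∀ x : LKElem D S l k, IsCopyLK x a.1 → I.cn c (g.toFun x)
    | .inr (.inl (a, φ)) => ∀ x : LKElem D S l k, IsCopyLK x a.1 → I.cn c (φ x)
    | .inr (.inr δ) => I.cn c δ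
  rn r e e' := match e, e' with
    | .inl a, .inl b => D.rn r a.1 b.1 ∨
        (a = b ∧ ∀ x : LKElem D S l k, IsCopyLK x a.1 → I.rn r (g.toFun x) (g.toFun x))
    | .inl a, .inr (.inl (b, φ)) => a = b ∧
        ∀ x : LKElem D S l k, IsCopyLK x a.1 → I.rn r (g.toFun x) (φ x)
    | .inr (.inl (b, φ)), .inl a => a = b ∧
        ∀ x : LKElem D S l k, IsCopyLK x a.1 → I.rn r (φ x) (g.toFun x)
    | .inr (.inl (a, φ)), .inr (.inl (b, φ')) => a = b ∧
        ∀ x : LKElem D S l k, IsCopyLK x a.1 → I.rn r (φ x) (φ' x)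
    | .inr (.inr δ), .inr (.inr δ') => I.rn r δ δ'
    | _, _ => False

/-- The homomorphism from `D` into the guided model. -/
noncomputable def guidedHom (δ₀ : Δ) : Hom D (guided (D := D) (S := S) (l := l) (k := k) g) where
  toFun a := if h : a ∈ D.adom then Sum.inl ⟨a, h⟩ else Sum.inr (Sum.inr δ₀)
  map_cn := by
    intro c a hc
    have ha : a ∈ D.adom := Or.inl ⟨c, hc⟩
    simp only [dif_pos ha]
    intro x hx
    exact copy_cn hx hc
  map_rn := by
    intro r a b hr
    have ha : a ∈ D.adom := Or.inr (Or.inl ⟨r, b, hr⟩)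
    have hb : b ∈ D.adom := Or.inr (Or.inr ⟨r, a, hr⟩)
    simp only [dif_pos ha, dif_pos hb]
    exact Or.inl hr

end Guided

end Stmt7
namespace Stmt7
section Tree

open SimpleGraph

variable {V : Type} {G : SimpleGraph V}

/-- The unique path from `v` to the root. -/
noncomputable def pth (hconn : G.Connected) (r₀ v : V) : G.Path v r₀ :=
  (Classical.choice (hconn.preconnected v r₀)).toPath

lemma pth_eq (hconn : G.Connected) (hac : G.IsAcyclic) {r₀ v : V}
    (w : G.Walk v r₀) (hw : w.IsPath) : w = (pth hconn r₀ v).1 :=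
  congrArg Subtype.val (hac.path_unique ⟨w, hw⟩ (pth hconn r₀ v))

lemma pth_r0 (hconn : G.Connected) (hac : G.IsAcyclic) (r₀ : V) :
    ((pth hconn r₀ r₀).1 : G.Walk r₀ r₀) = Walk.nil :=
  (pth_eq hconn hac Walk.nil Walk.IsPath.nil).symm

/-- Depth of a vertex. -/
noncomputable def dd (hconn : G.Connected) (r₀ v : V) : ℕ := (pth hconn r₀ v).1.length

lemma dd_eq_zero (hconn : G.Connected) {r₀ v : V} (h : dd hconn r₀ v = 0) : v = r₀ :=
  Walk.eq_of_length_eq_zero h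

lemma exists_par (hconn : G.Connected) {r₀ v : V} (h : v ≠ r₀) :
    ∃ (u : V) (hadj : G.Adj v u) (q : G.Walk u r₀),
      (pth hconn r₀ v).1 = Walk.cons hadj q := by
  cases h' : (pth hconn r₀ v).1 with
  | nil => exact absurd rfl h
  | cons hadj q => exact ⟨_, hadj, q, rfl⟩

/-- The parent of a vertex. -/
noncomputable def par (hconn : G.Connected) (r₀ v : V) : V :=
  if h : v = r₀ then r₀ else (exists_par hconn h).choose

lemma pth_cons_par (hconn : G.Connected) (hac : G.IsAcyclic) {r₀ v u : V}
    (hadj : G.Adj v u) (q : G.Walk u r₀) (h : (pth hconn r₀ v).1 = Walk.cons hadj q) :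
    par hconn r₀ v = u ∧ q = (pth hconn r₀ u).1 := by
  have hv : v ≠ r₀ := by
    rintro rfl
    rw [pth_r0 hconn hac] at h
    exact absurd (congrArg Walk.length h) (by simp)
  have hq : q.IsPath := by
    have := (pth hconn r₀ v).2
    rw [h] at this; exact this.of_cons
  refine ⟨?_, pth_eq hconn hac q hq⟩
  have hpar : par hconn r₀ v = (exists_par hconn hv).choose := dif_neg hv
  obtain ⟨hadj', q', hq'⟩ := (exists_par hconn hv).choose_spec
  have hq2 : Walk.cons hadj q = Walk.cons hadj' q' := h.symm.trans hq'
  have h3 : (Walk.cons hadj q).support.tail.head? = some u := by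
    rw [Walk.support_cons, q.support_eq_cons]; rfl
  have h4 : (Walk.cons hadj' q').support.tail.head? = some ((exists_par hconn hv).choose) := by
    rw [Walk.support_cons, q'.support_eq_cons]; rfl
  have hsup := congrArg (fun s => s.support.tail.head?) hq2
  have := Option.some.inj (h3.symm.trans (hsup.trans h4))
  rw [hpar, ← this]

lemma par_spec (hconn : G.Connected) (hac : G.IsAcyclic) {r₀ v : V} (h : v ≠ r₀) :
    ∃ hadj : G.Adj v (par hconn r₀ v),
      (pth hconn r₀ v).1 = Walk.cons hadj ((pth hconn r₀ (par hconn r₀ v)).1) := by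
  obtain ⟨u, hadj, q, hq⟩ := exists_par hconn h
  obtain ⟨hpar, hq'⟩ := pth_cons_par hconn hac hadj q hq
  subst hpar
  rw [hq'] at hq
  exact ⟨hadj, hq⟩

lemma dd_par (hconn : G.Connected) (hac : G.IsAcyclic) {r₀ v : V} (h : v ≠ r₀) :
    dd hconn r₀ (par hconn r₀ v) + 1 = dd hconn r₀ v := by
  obtain ⟨hadj, hq⟩ := par_spec hconn hac h
  unfold dd
  rw [hq, Walk.length_cons]

lemma par_adj (hconn : G.Connected) (hac : G.IsAcyclic) {r₀ v : V} (h : v ≠ r₀) :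
    G.Adj v (par hconn r₀ v) :=
  (par_spec hconn hac h).choose

lemma adj_par (hconn : G.Connected) (hac : G.IsAcyclic) {r₀ u v : V}
    (hadj : G.Adj u v) :
    (u ≠ r₀ ∧ par hconn r₀ u = v) ∨ (v ≠ r₀ ∧ par hconn r₀ v = u) := by
  classical
  by_cases hu : u ∈ (pth hconn r₀ v).1.support
  · right
    have hsing : (Walk.cons hadj.symm (Walk.nil : G.Walk u u)).IsPath := by
      refine Walk.IsPath.nil.cons ?_
      simp [hadj.ne']
    have ht1 : ((pth hconn r₀ v).1.takeUntil u hu).IsPath :=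
      (pth hconn r₀ v).2.takeUntil hu
    have heq : (pth hconn r₀ v).1.takeUntil u hu = Walk.cons hadj.symm Walk.nil := by
      have := hac.path_unique ⟨(pth hconn r₀ v).1.takeUntil u hu, ht1⟩
        ⟨Walk.cons hadj.symm Walk.nil, hsing⟩
      exact congrArg Subtype.val this
    have hspec := (pth hconn r₀ v).1.take_spec hu
    rw [heq] at hspec
    simp only [Walk.cons_append, Walk.nil_append] at hspec
    obtain ⟨hpar, -⟩ := pth_cons_par hconn hac hadj.symm _ hspec.symm
    refine ⟨?_, hpar⟩
    rintro rfl
    have hz : ((pth hconn v v).1).length = 0 := by rw [pth_r0 hconn hac]; rfl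
    have := congrArg Walk.length hspec
    simp only [Walk.length_cons, hz] at this
    omega
  · left
    have hcons : (Walk.cons hadj (pth hconn r₀ v).1).IsPath :=
      (pth hconn r₀ v).2.cons hu
    have := pth_eq hconn hac _ hcons
    obtain ⟨hpar, -⟩ := pth_cons_par hconn hac hadj _ this.symm
    refine ⟨?_, hpar⟩
    rintro rfl
    have hz : ((pth hconn u u).1).length = 0 := by rw [pth_r0 hconn hac]; rfl
    have h2 := congrArg Walk.length this
    simp only [Walk.length_cons, hz] at h2
    omega

end Tree
end Stmt7
namespace Stmt7

section Transfer

variable {C R A Δ : Type} {D : Interp C R A} {S : Set A} {l k : ℕ} {W : Type}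

/-- Anchors of the images of a set of variables. -/
def pfa (f : W → Om D S l k Δ) (B : Set W) : Set A :=
  {a | ∃ z ∈ B, anc (f z) = some a}

variable {f : W → Om D S l k Δ}

lemma pfa_mono {B B' : Set W} (h : B ⊆ B') : pfa f B ⊆ pfa f B' := by
  rintro a ⟨z, hz, hza⟩; exact ⟨z, h hz, hza⟩

lemma pfa_sub_adom {B : Set W} : pfa f B ⊆ D.adom := by
  rintro a ⟨z, hz, hza⟩; exact anc_adom hza

lemma ancSet_finite (e : Om D S l k Δ) : {a : A | anc e = some a}.Finite := by
  cases h : anc (D := D) (S := S) (l := l) (k := k) e with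
  | none => convert Set.finite_empty; ext a; simp [h]
  | some a₀ =>
    apply Set.Finite.subset (Set.finite_singleton a₀)
    intro a ha
    simp only [Set.mem_setOf_eq, h] at ha
    simp [Option.some.inj ha]

lemma ancSet_ncard (e : Om D S l k Δ) : {a : A | anc e = some a}.ncard ≤ 1 := by
  cases h : anc (D := D) (S := S) (l := l) (k := k) e with
  | none =>
    have : {a : A | anc e = some a} = ∅ := by ext a; simp [h]
    simp [this]
  | some a₀ =>
    have : {a : A | anc e = some a} ⊆ {a₀} := by
      intro a ha; simp only [Set.mem_setOf_eq, h] at ha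
      simp [Option.some.inj ha]
    simpa using Set.ncard_le_ncard this (Set.finite_singleton a₀)

lemma pfa_finite {B : Set W} (hB : B.Finite) : (pfa f B).Finite := by
  have : pfa f B ⊆ ⋃ z ∈ B, {a : A | anc (f z) = some a} := by
    rintro a ⟨z, hz, hza⟩
    exact Set.mem_biUnion hz hza
  exact Set.Finite.subset (Set.Finite.biUnion hB (fun z _ => ancSet_finite (f z))) this

lemma pfa_ncard_le {B : Set W} (hB : B.Finite) : (pfa f B).ncard ≤ B.ncard := by
  rcases Set.eq_empty_or_nonempty (pfa f B) with h | h
  · simp [h]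
  · obtain ⟨a₀, z₀, hz₀, ha₀⟩ := h
    have hch : ∀ a : A, ∃ z : W, a ∈ pfa f B → (z ∈ B ∧ anc (f z) = some a) := by
      intro a
      by_cases ha : a ∈ pfa f B
      · obtain ⟨z, hz, hza⟩ := ha; exact ⟨z, fun _ => ⟨hz, hza⟩⟩
      · exact ⟨z₀, fun h' => absurd h' ha⟩
    choose w hw using hch
    refine Set.ncard_le_ncard_of_injOn w (fun a ha => (hw a ha).1) ?_ hB
    intro a ha b hb he
    have h1 := (hw a ha).2
    have h2 := (hw b hb).2
    rw [he] at h1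
    rw [h1] at h2
    exact Option.some.inj h2

end Transfer

end Stmt7
namespace Stmt7

section SeqRec

variable {C R A Δ : Type} {D : Interp C R A} {S : Set A} {l k : ℕ} {W : Type}
variable {M : Interp C R W} {Q : Set W}

/-- The sequences assigned along the decomposition tree, by recursion on depth. -/
noncomputable def seqAux (hS : S ⊆ D.adom) (f : W → Om D S l k Δ)
    (td : TreeDecomp (M.restrict Q) l k) (r₀ : td.V) {T₀ : Set A}
    (seed : LKSeq D S l k T₀) (hseed : S ∪ pfa f (td.bag r₀) ⊆ T₀) :
    (n : ℕ) → (v : td.V) → dd td.conn r₀ v = n →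
      Σ' T : Set A, LKSeq D S l k T ×' (S ∪ pfa f (td.bag v) ⊆ T)
  | 0, v, hv => ⟨T₀, seed, by
      have : v = r₀ := dd_eq_zero td.conn hv
      subst this
      exact hseed⟩
  | (n+1), v, hv => by
      have hd0 : dd td.conn r₀ r₀ = 0 := by unfold dd; rw [pth_r0 td.conn td.acyc]; rfl
      have hvne : v ≠ r₀ := by
        intro hvr
        rw [hvr, hd0] at hv
        omega
      have hu : dd td.conn r₀ (par td.conn r₀ v) = n := by
        have := dd_par td.conn td.acyc hvne
        omega
      have p := seqAux hS f td r₀ seed hseed n (par td.conn r₀ v) hu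
      have hadj : td.G.Adj v (par td.conn r₀ v) := par_adj td.conn td.acyc hvne
      refine ⟨S ∪ pfa f (td.bag v),
        p.2.1.step (S ∪ pfa f (td.bag (par td.conn r₀ v) ∩ td.bag v)) (S ∪ pfa f (td.bag v))
          Set.subset_union_left ?_ ?_ ?_ ?_, Set.Subset.rfl⟩
      · -- O ⊆ T ∩ T'
        intro a ha
        rcases ha with ha | ha
        · exact ⟨p.2.2 (Or.inl ha), Or.inl ha⟩
        · exact ⟨p.2.2 (Or.inr (pfa_mono Set.inter_subset_left ha)),
            Or.inr (pfa_mono Set.inter_subset_right ha)⟩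
      · -- (O \ S).Finite
        apply Set.Finite.subset (pfa_finite (Set.Finite.subset (td.bagFin _) Set.inter_subset_left))
        intro a ha
        rcases ha.1 with h | h
        · exact absurd h ha.2
        · exact h
      · -- (O \ S).ncard ≤ l
        have hsub : (S ∪ pfa f (td.bag (par td.conn r₀ v) ∩ td.bag v)) \ S ⊆
            pfa f (td.bag (par td.conn r₀ v) ∩ td.bag v) := by
          intro a ha
          rcases ha.1 with h | h
          · exact absurd h ha.2
          · exact h
        have hfin : (td.bag (par td.conn r₀ v) ∩ td.bag v).Finite :=
          Set.Finite.subset (td.bagFin _) Set.inter_subset_left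
        calc ((S ∪ pfa f (td.bag (par td.conn r₀ v) ∩ td.bag v)) \ S).ncard
            ≤ (pfa f (td.bag (par td.conn r₀ v) ∩ td.bag v)).ncard :=
              Set.ncard_le_ncard hsub (pfa_finite hfin)
          _ ≤ (td.bag (par td.conn r₀ v) ∩ td.bag v).ncard := pfa_ncard_le hfin
          _ = (td.bag v ∩ td.bag (par td.conn r₀ v)).ncard := by rw [Set.inter_comm]
          _ ≤ l := td.overlap _ _ hadj.ne
      · -- SeqOk
        refine ⟨Set.subset_union_left, ?_, ?_, ?_⟩
        · intro a ha
          rcases ha with h | h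
          · exact hS h
          · exact pfa_sub_adom h
        · apply Set.Finite.subset (pfa_finite (td.bagFin v))
          intro a ha
          rcases ha.1 with h | h
          · exact absurd h ha.2
          · exact h
        · have hsub : (S ∪ pfa f (td.bag v)) \ S ⊆ pfa f (td.bag v) := by
            intro a ha
            rcases ha.1 with h | h
            · exact absurd h ha.2
            · exact h
          calc ((S ∪ pfa f (td.bag v)) \ S).ncard
              ≤ (pfa f (td.bag v)).ncard := Set.ncard_le_ncard hsub (pfa_finite (td.bagFin v))
            _ ≤ (td.bag v).ncard := pfa_ncard_le (td.bagFin v)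
            _ ≤ k := td.bagCard v

/-- The sequence assigned to a decomposition node. -/
noncomputable def seqsV (hS : S ⊆ D.adom) (f : W → Om D S l k Δ)
    (td : TreeDecomp (M.restrict Q) l k) (r₀ : td.V) {T₀ : Set A}
    (seed : LKSeq D S l k T₀) (hseed : S ∪ pfa f (td.bag r₀) ⊆ T₀) (v : td.V) :
    Σ' T : Set A, LKSeq D S l k T ×' (S ∪ pfa f (td.bag v) ⊆ T) :=
  seqAux hS f td r₀ seed hseed (dd td.conn r₀ v) v rfl

lemma seqAux_eq_seqsV (hS : S ⊆ D.adom) (f : W → Om D S l k Δ)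
    (td : TreeDecomp (M.restrict Q) l k) (r₀ : td.V) {T₀ : Set A}
    (seed : LKSeq D S l k T₀) (hseed : S ∪ pfa f (td.bag r₀) ⊆ T₀) (v : td.V)
    (n : ℕ) (h : dd td.conn r₀ v = n) :
    seqAux hS f td r₀ seed hseed n v h = seqsV hS f td r₀ seed hseed v := by
  subst h; rfl

lemma seqsV_r0 (hS : S ⊆ D.adom) (f : W → Om D S l k Δ)
    (td : TreeDecomp (M.restrict Q) l k) (r₀ : td.V) {T₀ : Set A}
    (seed : LKSeq D S l k T₀) (hseed : S ∪ pfa f (td.bag r₀) ⊆ T₀) :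
    (seqsV hS f td r₀ seed hseed r₀).1 = T₀ ∧
      HEq (seqsV hS f td r₀ seed hseed r₀).2.1 seed := by
  have h0 : dd td.conn r₀ r₀ = 0 := by unfold dd; rw [pth_r0 td.conn td.acyc]; rfl
  rw [← seqAux_eq_seqsV hS f td r₀ seed hseed r₀ 0 h0]
  exact ⟨rfl, HEq.rfl⟩

end SeqRec

end Stmt7
namespace Stmt7

section Stab

variable {C R A Δ : Type} {D : Interp C R A} {S : Set A} {l k : ℕ} {W : Type}
variable {M : Interp C R W} {Q : Set W}

lemma seqsV_rep_par (hS : S ⊆ D.adom) (f : W → Om D S l k Δ)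
    (td : TreeDecomp (M.restrict Q) l k) (r₀ : td.V) {T₀ : Set A}
    (seed : LKSeq D S l k T₀) (hseed : S ∪ pfa f (td.bag r₀) ⊆ T₀)
    {v : td.V} (hvne : v ≠ r₀) {a : A}
    (ha : a ∈ S ∨ a ∈ pfa f (td.bag (par td.conn r₀ v) ∩ td.bag v)) :
    (seqsV hS f td r₀ seed hseed v).2.1.rep a =
      (seqsV hS f td r₀ seed hseed (par td.conn r₀ v)).2.1.rep a := by
  have hd : dd td.conn r₀ v = dd td.conn r₀ (par td.conn r₀ v) + 1 :=
    (dd_par td.conn td.acyc hvne).symm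
  rw [← seqAux_eq_seqsV hS f td r₀ seed hseed v _ hd,
      ← seqAux_eq_seqsV hS f td r₀ seed hseed (par td.conn r₀ v) _ rfl]
  rw [seqAux]
  by_cases haS : a ∈ S
  · simp only [LKSeq.rep, if_pos haS]
    rw [rep_S _ haS]
  · simp only [LKSeq.rep, if_neg haS]
    rcases ha with h | h
    · exact absurd h haS
    · rw [if_pos (Set.mem_union_right _ h)]

lemma seqsV_rep_region (hS : S ⊆ D.adom) (f : W → Om D S l k Δ)
    (td : TreeDecomp (M.restrict Q) l k) (r₀ : td.V) {T₀ : Set A}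
    (seed : LKSeq D S l k T₀) (hseed : S ∪ pfa f (td.bag r₀) ⊆ T₀)
    (z : W) (hz : z ∈ (M.restrict Q).adom) {u v : td.V}
    (hzu : z ∈ td.bag u) (hzv : z ∈ td.bag v) {a : A} (haz : anc (f z) = some a) :
    (seqsV hS f td r₀ seed hseed u).2.1.rep a =
      (seqsV hS f td r₀ seed hseed v).2.1.rep a := by
  have hconn' := td.cover z hz
  have hreach := hconn'.preconnected ⟨u, hzu⟩ ⟨v, hzv⟩
  suffices H : ∀ (x y : ↥{w : td.V | z ∈ td.bag w})
      (w : (td.G.induce {w : td.V | z ∈ td.bag w}).Walk x y),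
      (seqsV hS f td r₀ seed hseed x.1).2.1.rep a =
        (seqsV hS f td r₀ seed hseed y.1).2.1.rep a by
    exact hreach.elim (fun w => H ⟨u, hzu⟩ ⟨v, hzv⟩ w)
  intro x y w
  induction w with
  | nil => rfl
  | @cons x' b' y' hadj q ih =>
    have hGadj : td.G.Adj x'.1 b'.1 := by simpa using hadj
    have step : (seqsV hS f td r₀ seed hseed x'.1).2.1.rep a =
        (seqsV hS f td r₀ seed hseed b'.1).2.1.rep a := by
      rcases adj_par td.conn td.acyc hGadj with ⟨hne, hpar⟩ | ⟨hne, hpar⟩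
      · -- par x' = b'
        have h1 := seqsV_rep_par hS f td r₀ seed hseed hne
          (a := a) (Or.inr ⟨z, ⟨by rw [hpar]; exact b'.2, x'.2⟩, haz⟩)
        rw [h1, hpar]
      · -- par b' = x'
        have h1 := seqsV_rep_par hS f td r₀ seed hseed hne
          (a := a) (Or.inr ⟨z, ⟨by rw [hpar]; exact x'.2, b'.2⟩, haz⟩)
        rw [h1, hpar]
    exact step.trans ih

end Stab

end Stmt7
namespace Stmt7

section TransferMain

variable {C R A Δ : Type} {D : Interp C R A} {S : Set A} {l k : ℕ} {W : Type}
variable {I : Interp C R Δ}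

/-- Value of a guided-model element relative to a sequence. -/
noncomputable def sigVal (g : Hom (unravelLK D S l k) I) (p : Σ' T : Set A, LKSeq D S l k T) :
    Om D S l k Δ → Δ
  | .inl a => g.toFun (p.2.rep a.1)
  | .inr (.inl (a, φ)) => φ (p.2.rep a.1)
  | .inr (.inr δ) => δ

theorem transfer {M : Interp C R W} {Q : Set W}
    (hS : S ⊆ D.adom) (hk : 1 ≤ k)
    (g : Hom (unravelLK D S l k) I) (f : W → Om D S l k Δ)
    (hfc : ∀ c z, M.cn c z → (guided g).cn c (f z))
    (hfr : ∀ r z z', M.rn r z z' → (guided g).rn r (f z) (f z'))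
    (hQ : ∀ z, z ∉ Q → ∃ s : {a : A // a ∈ D.adom}, s.1 ∈ S ∧ f z = Sum.inl s)
    (td : TreeDecomp (M.restrict Q) l k) (r₀ : td.V) {T₀ : Set A}
    (seed : LKSeq D S l k T₀) (hseed : S ∪ pfa f (td.bag r₀) ⊆ T₀) :
    ∃ σ : W → Δ,
      (∀ c z, M.cn c z → I.cn c (σ z)) ∧
      (∀ r z z', M.rn r z z' → I.rn r (σ z) (σ z')) ∧
      (∀ z (s : {a : A // a ∈ D.adom}), s.1 ∈ S → f z = Sum.inl s →
        σ z = g.toFun (Sum.inl s.1)) ∧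
      (∀ z (δ : Δ), f z = Sum.inr (Sum.inr δ) → σ z = δ) ∧
      (∀ z, z ∈ (M.restrict Q).adom → z ∈ td.bag r₀ →
        σ z = sigVal g ⟨T₀, seed⟩ (f z)) := by
  classical
  have hfresh : ∀ z : W, SeqOk D S k (S ∪ {a : A | anc (f z) = some a}) := by
    intro z
    refine ⟨Set.subset_union_left, ?_, ?_, ?_⟩
    · rintro a (h | h)
      · exact hS h
      · exact anc_adom h
    · apply Set.Finite.subset (ancSet_finite (f z))
      intro a ha
      rcases ha.1 with h | h
      · exact absurd h ha.2
      · exact h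
    · have hsub : (S ∪ {a : A | anc (f z) = some a}) \ S ⊆ {a : A | anc (f z) = some a} := by
        intro a ha
        rcases ha.1 with h | h
        · exact absurd h ha.2
        · exact h
      calc ((S ∪ {a : A | anc (f z) = some a}) \ S).ncard
          ≤ {a : A | anc (f z) = some a}.ncard :=
            Set.ncard_le_ncard hsub (ancSet_finite (f z))
        _ ≤ 1 := ancSet_ncard (f z)
        _ ≤ k := hk
  have hnodeOf : ∀ z, z ∈ (M.restrict Q).adom →
      ∃ v : td.V, z ∈ td.bag v ∧ (z ∈ td.bag r₀ → v = r₀) := by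
    intro z h
    by_cases hzr : z ∈ td.bag r₀
    · exact ⟨r₀, hzr, fun _ => rfl⟩
    · obtain ⟨⟨v, hv⟩⟩ := (td.cover z h).nonempty
      exact ⟨v, hv, fun h' => absurd h' hzr⟩
  choose nd hnd1 hnd2 using hnodeOf
  set AS : W → Σ' T : Set A, LKSeq D S l k T := fun z =>
    if h : z ∈ (M.restrict Q).adom then
      ⟨(seqsV hS f td r₀ seed hseed (nd z h)).1, (seqsV hS f td r₀ seed hseed (nd z h)).2.1⟩
    else ⟨S ∪ {a : A | anc (f z) = some a}, LKSeq.first _ (hfresh z)⟩ with hASdef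
  -- anchors live in the bag of the assigned sequence
  have hmem : ∀ z a, anc (f z) = some a → a ∈ (AS z).1 := by
    intro z a ha
    by_cases h : z ∈ (M.restrict Q).adom
    · have hAZ : AS z = ⟨(seqsV hS f td r₀ seed hseed (nd z h)).1,
          (seqsV hS f td r₀ seed hseed (nd z h)).2.1⟩ := dif_pos h
      rw [hAZ]
      exact (seqsV hS f td r₀ seed hseed (nd z h)).2.2 (Or.inr ⟨z, hnd1 z h, ha⟩)
    · have hAZ : AS z = ⟨S ∪ {a : A | anc (f z) = some a},
          LKSeq.first _ (hfresh z)⟩ := dif_neg h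
      rw [hAZ]
      exact Set.mem_union_right _ ha
  -- agreement with any node containing z
  have hagree : ∀ z (hz : z ∈ (M.restrict Q).adom) (v : td.V), z ∈ td.bag v →
      ∀ a : A, anc (f z) = some a →
        (AS z).2.rep a = (seqsV hS f td r₀ seed hseed v).2.1.rep a := by
    intro z hz v hv a ha
    have hAZ : AS z = ⟨(seqsV hS f td r₀ seed hseed (nd z hz)).1,
        (seqsV hS f td r₀ seed hseed (nd z hz)).2.1⟩ := dif_pos hz
    rw [hAZ]
    exact seqsV_rep_region hS f td r₀ seed hseed z hz (hnd1 z hz) hv ha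
  -- value determined by the rep at the anchor
  have hval : ∀ z (p q : Σ' T : Set A, LKSeq D S l k T),
      (∀ a, anc (f z) = some a → p.2.rep a = q.2.rep a) →
      sigVal g p (f z) = sigVal g q (f z) := by
    intro z p q hrep
    rcases hfz : f z with a | ⟨a, φ⟩ | δ
    · simp only [sigVal]
      rw [hrep a.1 (by rw [hfz]; rfl)]
    · simp only [sigVal]
      rw [hrep a.1 (by rw [hfz]; rfl)]
    · simp only [sigVal]
  -- the value of a parameter variable
  have hparval : ∀ z (s : {a : A // a ∈ D.adom}), s.1 ∈ S → f z = Sum.inl s →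
      ∀ p : Σ' T : Set A, LKSeq D S l k T, sigVal g p (f z) = g.toFun (Sum.inl s.1) := by
    intro z s hsS hfz p
    rw [hfz]
    simp only [sigVal]
    rw [rep_S _ hsS]
  -- a common sequence for the two endpoints of a role atom
  have hpair : ∀ r z z', M.rn r z z' → ∃ p : Σ' T : Set A, LKSeq D S l k T,
      (∀ a, anc (f z) = some a → a ∈ p.1) ∧
      (∀ a, anc (f z') = some a → a ∈ p.1) ∧
      sigVal g p (f z) = sigVal g (AS z) (f z) ∧
      sigVal g p (f z') = sigVal g (AS z') (f z') := by
    intro r z z' h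
    by_cases hzQ : z ∈ Q
    · by_cases hz'Q : z' ∈ Q
      · -- both in Q : common bag
        have hfact : (M.restrict Q).rn r z z' := ⟨hzQ, hz'Q, h⟩
        obtain ⟨v, hzv, hz'v⟩ := td.edges r z z' hfact
        have hza : z ∈ (M.restrict Q).adom := Or.inr (Or.inl ⟨r, z', hfact⟩)
        have hz'a : z' ∈ (M.restrict Q).adom := Or.inr (Or.inr ⟨r, z, hfact⟩)
        refine ⟨⟨(seqsV hS f td r₀ seed hseed v).1, (seqsV hS f td r₀ seed hseed v).2.1⟩,
          ?_, ?_, ?_, ?_⟩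
        · intro a ha
          exact (seqsV hS f td r₀ seed hseed v).2.2 (Or.inr ⟨z, hzv, ha⟩)
        · intro a ha
          exact (seqsV hS f td r₀ seed hseed v).2.2 (Or.inr ⟨z', hz'v, ha⟩)
        · exact hval z _ _ (fun a ha => (hagree z hza v hzv a ha).symm)
        · exact hval z' _ _ (fun a ha => (hagree z' hz'a v hz'v a ha).symm)
      · -- z' is a parameter
        obtain ⟨s', hs'S, hfz'⟩ := hQ z' hz'Q
        refine ⟨AS z, fun a ha => hmem z a ha, ?_, rfl, ?_⟩
        · intro a ha
          rw [hfz'] at ha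
          cases Option.some.inj ha
          exact seq_S_sub (AS z).2 hs'S
        · rw [hparval z' s' hs'S hfz' (AS z), hparval z' s' hs'S hfz' (AS z')]
    · -- z is a parameter
      obtain ⟨s, hsS, hfz⟩ := hQ z hzQ
      refine ⟨AS z', ?_, fun a ha => hmem z' a ha, ?_, rfl⟩
      · intro a ha
        rw [hfz] at ha
        cases Option.some.inj ha
        exact seq_S_sub (AS z').2 hsS
      · rw [hparval z s hsS hfz (AS z'), hparval z s hsS hfz (AS z)]
  refine ⟨fun z => sigVal g (AS z) (f z), ?_, ?_, ?_, ?_, ?_⟩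
  · -- concept atoms
    intro c z hcz
    rcases hfz : f z with a | ⟨a, φ⟩ | δ
    · have hg := hfc c z hcz
      rw [hfz] at hg
      show I.cn c (sigVal g (AS z) (f z))
      rw [hfz]
      exact hg ((AS z).2.rep a.1) (isCopy_rep (AS z).2 (hmem z a.1 (by rw [hfz]; rfl)))
    · have hg := hfc c z hcz
      rw [hfz] at hg
      show I.cn c (sigVal g (AS z) (f z))
      rw [hfz]
      exact hg ((AS z).2.rep a.1) (isCopy_rep (AS z).2 (hmem z a.1 (by rw [hfz]; rfl)))
    · have hg := hfc c z hcz
      rw [hfz] at hg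
      show I.cn c (sigVal g (AS z) (f z))
      rw [hfz]
      exact hg
  · -- role atoms
    intro r z z' h
    obtain ⟨p, m1, m2, e1, e2⟩ := hpair r z z' h
    show I.rn r (sigVal g (AS z) (f z)) (sigVal g (AS z') (f z'))
    rw [← e1, ← e2]
    rcases hfz : f z with a | ⟨a, φ⟩ | δ <;> rcases hfz' : f z' with b | ⟨b, φ'⟩ | δ' <;>
      (have hg := hfr r z z' h; rw [hfz, hfz'] at hg; simp only [sigVal])
    · -- inl / inl
      rcases hg with hD | ⟨heq, hloop⟩
      · exact seq_rn p.2 (m1 a.1 (by rw [hfz]; rfl)) (m2 b.1 (by rw [hfz']; rfl)) hD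
      · cases heq
        exact hloop _ (isCopy_rep p.2 (m1 a.1 (by rw [hfz]; rfl)))
    · -- inl / null
      obtain ⟨heq, hx⟩ := hg
      cases heq
      exact hx _ (isCopy_rep p.2 (m1 a.1 (by rw [hfz]; rfl)))
    · exact hg.elim
    · -- null / inl
      obtain ⟨heq, hx⟩ := hg
      cases heq
      exact hx _ (isCopy_rep p.2 (m2 _ (by rw [hfz']; rfl)))
    · -- null / null
      obtain ⟨heq, hx⟩ := hg
      cases heq
      exact hx _ (isCopy_rep p.2 (m1 a.1 (by rw [hfz]; rfl)))
    · exact hg.elim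
    · exact hg.elim
    · exact hg.elim
    · exact hg
  · -- parameters
    intro z s hsS hfz
    exact hparval z s hsS hfz (AS z)
  · -- Δ-part
    intro z δ hfz
    show sigVal g (AS z) (f z) = δ
    rw [hfz]
    rfl
  · -- seed values at the root bag
    intro z hz hzr
    refine (hval z ⟨T₀, seed⟩ (AS z) ?_).symm
    intro a ha
    have h1 := hagree z hz r₀ hzr a ha
    have h0 : dd td.conn r₀ r₀ = 0 := by unfold dd; rw [pth_r0 td.conn td.acyc]; rfl
    have h2 : seqsV hS f td r₀ seed hseed r₀ = seqAux hS f td r₀ seed hseed 0 r₀ h0 :=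
      (seqAux_eq_seqsV hS f td r₀ seed hseed r₀ 0 h0).symm
    rw [h1, h2]
    rfl

end TransferMain

end Stmt7
namespace Stmt7

section SatHelpers

variable {C R A Δ : Type} {D : Interp C R A} {S : Set A} {l k : ℕ} {W : Type}

lemma restrict_adom_sub {M : Interp C R W} {Q : Set W} :
    (M.restrict Q).adom ⊆ M.adom := by
  rintro z (⟨c, hc⟩ | ⟨r, b, hb⟩ | ⟨r, b, hb⟩)
  · exact Or.inl ⟨c, hc.2⟩
  · exact Or.inr (Or.inl ⟨r, b, hb.2.2⟩)
  · exact Or.inr (Or.inr ⟨r, b, hb.2.2⟩)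

/-- Convert a tree decomposition of `M` to one of `M.restrict Set.univ`. -/
def tdToUniv {M : Interp C R W} (td : TreeDecomp M l k) :
    TreeDecomp (M.restrict Set.univ) l k where
  V := td.V
  G := td.G
  conn := td.conn
  acyc := td.acyc
  bag := td.bag
  cover := fun a ha => td.cover a (restrict_adom_sub ha)
  edges := fun r a b h => td.edges r a b h.2.2
  bagFin := td.bagFin
  bagCard := td.bagCard
  overlap := td.overlap

lemma seqOk_insert (hS : S ⊆ D.adom) (hk : 1 ≤ k) {a : A} (ha : a ∈ D.adom) :
    SeqOk D S k (S ∪ {a}) := by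
  refine ⟨Set.subset_union_left, ?_, ?_, ?_⟩
  · rintro b (h | h)
    · exact hS h
    · rw [Set.mem_singleton_iff] at h; exact h ▸ ha
  · apply Set.Finite.subset (Set.finite_singleton a)
    intro b hb
    rcases hb.1 with h | h
    · exact absurd h hb.2
    · exact h
  · have : (S ∪ {a}) \ S ⊆ {a} := by
      intro b hb; rcases hb.1 with h | h
      · exact absurd h hb.2
      · exact h
    calc ((S ∪ {a}) \ S).ncard ≤ ({a} : Set A).ncard :=
        Set.ncard_le_ncard this (Set.finite_singleton a)
      _ = 1 := Set.ncard_singleton a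
      _ ≤ k := hk

lemma exists_copy (hS : S ⊆ D.adom) (hk : 1 ≤ k) {a : A} (ha : a ∈ D.adom) :
    ∃ x : LKElem D S l k, IsCopyLK x a :=
  ⟨_, isCopy_rep (LKSeq.first (S ∪ {a}) (seqOk_insert hS hk ha))
    (Set.mem_union_right _ rfl)⟩

lemma seqOk_pfa {f : W → Om D S l k Δ} (hS : S ⊆ D.adom) {B : Set W}
    (hB : B.Finite) (hcard : B.ncard ≤ k) : SeqOk D S k (S ∪ pfa f B) := by
  refine ⟨Set.subset_union_left, ?_, ?_, ?_⟩
  · rintro b (h | h)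
    · exact hS h
    · exact pfa_sub_adom h
  · apply Set.Finite.subset (pfa_finite hB)
    intro b hb; rcases hb.1 with h | h
    · exact absurd h hb.2
    · exact h
  · have hsub : (S ∪ pfa f B) \ S ⊆ pfa f B := by
      intro b hb; rcases hb.1 with h | h
      · exact absurd h hb.2
      · exact h
    calc ((S ∪ pfa f B) \ S).ncard ≤ (pfa f B).ncard := Set.ncard_le_ncard hsub (pfa_finite hB)
      _ ≤ B.ncard := pfa_ncard_le hB
      _ ≤ k := hcard

end SatHelpers

end Stmt7
namespace Stmt7

section Saturation

variable {C R A : Type} {D : Interp C R A} {S : Set A} {l k : ℕ}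

theorem guidedModels (hS : S ⊆ D.adom) (hl : 1 ≤ l) (hlk : l < k)
    {Δ : Type} {I : Interp C R Δ} (δ₀ : Δ)
    (O : Set (TGD C R)) (hO : ∀ tg ∈ O, tg.n ≤ 1 ∧ HasTW tg.body.canon l k)
    (hI : ModelsTGDSet I O) (g : Hom (unravelLK D S l k) I) :
    ModelsTGDSet (guided g) O := by
  classical
  have hk : 1 ≤ k := le_trans hl (le_of_lt hlk)
  intro tg htg
  obtain ⟨hn, ⟨td₀⟩⟩ := hO tg htg
  have td : TreeDecomp (tg.body.canon.restrict Set.univ) l k := tdToUniv td₀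
  intro vv hbody
  obtain ⟨h, hfr0, hcn, hrn⟩ := hbody
  have hfc : ∀ c z, tg.body.canon.cn c z → (guided g).cn c (h z) :=
    fun c z hz => hcn (c, z) hz
  have hfrn : ∀ r z z', tg.body.canon.rn r z z' → (guided g).rn r (h z) (h z') :=
    fun r z z' hz => hrn (r, z, z') hz
  -- the plain transfer
  have plain : ∃ σ : (Fin tg.n ⊕ tg.body.V) → Δ,
      (∀ c z, tg.body.canon.cn c z → I.cn c (σ z)) ∧
      (∀ r z z', tg.body.canon.rn r z z' → I.rn r (σ z) (σ z')) ∧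
      (∀ z (δ : Δ), h z = Sum.inr (Sum.inr δ) → σ z = δ) := by
    obtain ⟨r₀⟩ := td.conn.nonempty
    obtain ⟨σ, c1, c2, c3, c4, c5⟩ := transfer hS hk g h hfc hfrn
      (fun z hz => absurd (Set.mem_univ z) hz) td r₀
      (LKSeq.first _ (seqOk_pfa hS (td.bagFin r₀) (td.bagCard r₀))) subset_rfl
    exact ⟨σ, c1, c2, c4⟩
  by_cases hB : Nonempty (Fin tg.n)
  · -- there is a frontier variable
    obtain ⟨i₀⟩ := hB
    have hiall : ∀ i : Fin tg.n, i = i₀ := by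
      intro i
      have h1 : i.1 < tg.n := i.2
      have h2 : i₀.1 < tg.n := i₀.2
      exact Fin.ext (by omega)
    have hv0 : h (Sum.inl i₀) = vv i₀ := hfr0 i₀
    rcases he : h (Sum.inl i₀) with a | ⟨a, φ⟩ | δ
    · -- frontier maps to a database element
      have hkey : ∀ x : LKElem D S l k, IsCopyLK x a.1 →
          ∃ τ : (Fin tg.n ⊕ tg.body.V) → Δ,
            (∀ c z, tg.body.canon.cn c z → I.cn c (τ z)) ∧
            (∀ r z z', tg.body.canon.rn r z z' → I.rn r (τ z) (τ z')) ∧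
            τ (Sum.inl i₀) = g.toFun x := by
        intro x hx
        obtain ⟨Tx, wx, haT, hxeq⟩ := hx
        by_cases hz0 : (Sum.inl i₀ : Fin tg.n ⊕ tg.body.V) ∈
            (tg.body.canon.restrict Set.univ).adom
        · obtain ⟨⟨r₀, hz0r⟩⟩ := (td.cover _ hz0).nonempty
          have hapfa : a.1 ∈ pfa h (td.bag r₀) := ⟨Sum.inl i₀, hz0r, by rw [he]; rfl⟩
          have hT'ok : SeqOk D S k (S ∪ pfa h (td.bag r₀)) :=
            seqOk_pfa hS (td.bagFin r₀) (td.bagCard r₀)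
          have pf2 : (S ∪ {a.1}) ⊆ Tx ∩ (S ∪ pfa h (td.bag r₀)) := by
            rintro b (hb | hb)
            · exact ⟨seq_S_sub wx hb, Or.inl hb⟩
            · rw [Set.mem_singleton_iff] at hb
              subst hb
              exact ⟨haT, Or.inr hapfa⟩
          have pf3 : ((S ∪ {a.1}) \ S).Finite := by
            apply Set.Finite.subset (Set.finite_singleton a.1)
            intro b hb
            rcases hb.1 with h' | h'
            · exact absurd h' hb.2
            · exact h'
          have pf4 : ((S ∪ {a.1}) \ S).ncard ≤ l := by
            have hsub : (S ∪ {a.1}) \ S ⊆ {a.1} := by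
              intro b hb
              rcases hb.1 with h' | h'
              · exact absurd h' hb.2
              · exact h'
            calc ((S ∪ {a.1}) \ S).ncard ≤ ({a.1} : Set A).ncard :=
                Set.ncard_le_ncard hsub (Set.finite_singleton a.1)
              _ = 1 := Set.ncard_singleton a.1
              _ ≤ l := hl
          have hrep : (LKSeq.step wx (S ∪ {a.1}) (S ∪ pfa h (td.bag r₀))
              Set.subset_union_left pf2 pf3 pf4 hT'ok).rep a.1 = x := by
            by_cases haS : a.1 ∈ S
            · rw [rep_S _ haS, hxeq, rep_S wx haS]
            · simp only [LKSeq.rep, if_neg haS,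
                if_pos (Set.mem_union_right S (Set.mem_singleton a.1))]
              exact hxeq.symm
          obtain ⟨σ, c1, c2, c3, c4, c5⟩ := transfer hS hk g h hfc hfrn
            (fun z hz => absurd (Set.mem_univ z) hz) td r₀
            (LKSeq.step wx (S ∪ {a.1}) (S ∪ pfa h (td.bag r₀))
              Set.subset_union_left pf2 pf3 pf4 hT'ok) subset_rfl
          refine ⟨σ, c1, c2, ?_⟩
          have hσ0 := c5 (Sum.inl i₀) hz0 hz0r
          rw [hσ0, he]
          show g.toFun (LKSeq.rep _ a.1) = g.toFun x
          rw [hrep]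
        · -- isolated frontier variable
          obtain ⟨σ, c1, c2, c4⟩ := plain
          refine ⟨Function.update σ (Sum.inl i₀) (g.toFun x), ?_, ?_,
            Function.update_self _ _ _⟩
          · intro c z hcz
            have hz : z ≠ Sum.inl i₀ := by
              rintro rfl
              exact hz0 (Or.inl ⟨c, ⟨Set.mem_univ _, hcz⟩⟩)
            rw [Function.update_of_ne hz]
            exact c1 c z hcz
          · intro r z z' hr
            have hz : z ≠ Sum.inl i₀ := by
              rintro rfl
              exact hz0 (Or.inr (Or.inl ⟨r, z', ⟨Set.mem_univ _, Set.mem_univ _, hr⟩⟩))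
            have hz' : z' ≠ Sum.inl i₀ := by
              rintro rfl
              exact hz0 (Or.inr (Or.inr ⟨r, z, ⟨Set.mem_univ _, Set.mem_univ _, hr⟩⟩))
            rw [Function.update_of_ne hz, Function.update_of_ne hz']
            exact c2 r z z' hr
      cases hhd : tg.head with
      | none =>
        obtain ⟨x₀, hx₀⟩ := exists_copy hS hk a.2
        obtain ⟨τ, t1, t2, t3⟩ := hkey x₀ hx₀
        have hIb : tg.body.Eval I (fun i => τ (Sum.inl i)) :=
          ⟨τ, fun i => rfl, fun p hp => t1 _ _ hp, fun t ht => t2 _ _ _ ht⟩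
        have hSat := hI tg htg _ hIb
        rw [hhd] at hSat
        exact hSat
      | some ψ =>
        have hwit : ∀ x : LKElem D S l k, IsCopyLK x a.1 →
            ∃ hh : Fin tg.n ⊕ ψ.V → Δ,
              (∀ i, hh (Sum.inl i) = g.toFun x) ∧
              (∀ p ∈ ψ.cnAtoms, I.cn p.1 (hh p.2)) ∧
              (∀ t ∈ ψ.rnAtoms, I.rn t.1 (hh t.2.1) (hh t.2.2)) := by
          intro x hx
          obtain ⟨τ, t1, t2, t3⟩ := hkey x hx
          have hIb : tg.body.Eval I (fun i => τ (Sum.inl i)) :=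
            ⟨τ, fun i => rfl, fun p hp => t1 _ _ hp, fun t ht => t2 _ _ _ ht⟩
          have hSat := hI tg htg _ hIb
          rw [hhd] at hSat
          obtain ⟨hh, hh1, hh2, hh3⟩ := hSat
          refine ⟨hh, ?_, hh2, hh3⟩
          intro i
          rw [hh1 i]
          show τ (Sum.inl i) = g.toFun x
          rw [hiall i]
          exact t3
        choose HH hh1 hh2 hh3 using hwit
        show ψ.Eval (guided g) vv
        refine ⟨fun w => Sum.rec (fun _ => Sum.inl a)
          (fun y => Sum.inr (Sum.inl (a, fun x =>
            if hx : IsCopyLK x a.1 then HH x hx (Sum.inr y) else δ₀))) w, ?_, ?_, ?_⟩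
        · intro i
          show Sum.inl a = vv i
          rw [hiall i, ← hv0, he]
        · rintro ⟨c, i | y⟩ hp
          · intro x hx
            have := hh2 x hx _ hp
            rwa [hh1 x hx i] at this
          · intro x hx
            simp only [dif_pos hx]
            exact hh2 x hx _ hp
        · rintro ⟨r, i | y, j | y'⟩ ht
          · refine Or.inr ⟨rfl, fun x hx => ?_⟩
            have := hh3 x hx _ ht
            rwa [hh1 x hx i, hh1 x hx j] at this
          · refine ⟨rfl, fun x hx => ?_⟩
            have := hh3 x hx _ ht
            rw [hh1 x hx i] at this
            simpa [dif_pos hx] using this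
          · refine ⟨rfl, fun x hx => ?_⟩
            have := hh3 x hx _ ht
            rw [hh1 x hx j] at this
            simpa [dif_pos hx] using this
          · refine ⟨rfl, fun x hx => ?_⟩
            have := hh3 x hx _ ht
            simpa [dif_pos hx] using this
    · -- frontier maps to a null
      have hkey : ∀ x : LKElem D S l k, IsCopyLK x a.1 →
          ∃ τ : (Fin tg.n ⊕ tg.body.V) → Δ,
            (∀ c z, tg.body.canon.cn c z → I.cn c (τ z)) ∧
            (∀ r z z', tg.body.canon.rn r z z' → I.rn r (τ z) (τ z')) ∧
            τ (Sum.inl i₀) = φ x := by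
        intro x hx
        obtain ⟨Tx, wx, haT, hxeq⟩ := hx
        by_cases hz0 : (Sum.inl i₀ : Fin tg.n ⊕ tg.body.V) ∈
            (tg.body.canon.restrict Set.univ).adom
        · obtain ⟨⟨r₀, hz0r⟩⟩ := (td.cover _ hz0).nonempty
          have hapfa : a.1 ∈ pfa h (td.bag r₀) := ⟨Sum.inl i₀, hz0r, by rw [he]; rfl⟩
          have hT'ok : SeqOk D S k (S ∪ pfa h (td.bag r₀)) :=
            seqOk_pfa hS (td.bagFin r₀) (td.bagCard r₀)
          have pf2 : (S ∪ {a.1}) ⊆ Tx ∩ (S ∪ pfa h (td.bag r₀)) := by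
            rintro b (hb | hb)
            · exact ⟨seq_S_sub wx hb, Or.inl hb⟩
            · rw [Set.mem_singleton_iff] at hb
              subst hb
              exact ⟨haT, Or.inr hapfa⟩
          have pf3 : ((S ∪ {a.1}) \ S).Finite := by
            apply Set.Finite.subset (Set.finite_singleton a.1)
            intro b hb
            rcases hb.1 with h' | h'
            · exact absurd h' hb.2
            · exact h'
          have pf4 : ((S ∪ {a.1}) \ S).ncard ≤ l := by
            have hsub : (S ∪ {a.1}) \ S ⊆ {a.1} := by
              intro b hb
              rcases hb.1 with h' | h'
              · exact absurd h' hb.2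
              · exact h'
            calc ((S ∪ {a.1}) \ S).ncard ≤ ({a.1} : Set A).ncard :=
                Set.ncard_le_ncard hsub (Set.finite_singleton a.1)
              _ = 1 := Set.ncard_singleton a.1
              _ ≤ l := hl
          have hrep : (LKSeq.step wx (S ∪ {a.1}) (S ∪ pfa h (td.bag r₀))
              Set.subset_union_left pf2 pf3 pf4 hT'ok).rep a.1 = x := by
            by_cases haS : a.1 ∈ S
            · rw [rep_S _ haS, hxeq, rep_S wx haS]
            · simp only [LKSeq.rep, if_neg haS,
                if_pos (Set.mem_union_right S (Set.mem_singleton a.1))]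
              exact hxeq.symm
          obtain ⟨σ, c1, c2, c3, c4, c5⟩ := transfer hS hk g h hfc hfrn
            (fun z hz => absurd (Set.mem_univ z) hz) td r₀
            (LKSeq.step wx (S ∪ {a.1}) (S ∪ pfa h (td.bag r₀))
              Set.subset_union_left pf2 pf3 pf4 hT'ok) subset_rfl
          refine ⟨σ, c1, c2, ?_⟩
          have hσ0 := c5 (Sum.inl i₀) hz0 hz0r
          rw [hσ0, he]
          show φ (LKSeq.rep _ a.1) = φ x
          rw [hrep]
        · obtain ⟨σ, c1, c2, c4⟩ := plain
          refine ⟨Function.update σ (Sum.inl i₀) (φ x), ?_, ?_,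
            Function.update_self _ _ _⟩
          · intro c z hcz
            have hz : z ≠ Sum.inl i₀ := by
              rintro rfl
              exact hz0 (Or.inl ⟨c, ⟨Set.mem_univ _, hcz⟩⟩)
            rw [Function.update_of_ne hz]
            exact c1 c z hcz
          · intro r z z' hr
            have hz : z ≠ Sum.inl i₀ := by
              rintro rfl
              exact hz0 (Or.inr (Or.inl ⟨r, z', ⟨Set.mem_univ _, Set.mem_univ _, hr⟩⟩))
            have hz' : z' ≠ Sum.inl i₀ := by
              rintro rfl
              exact hz0 (Or.inr (Or.inr ⟨r, z, ⟨Set.mem_univ _, Set.mem_univ _, hr⟩⟩))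
            rw [Function.update_of_ne hz, Function.update_of_ne hz']
            exact c2 r z z' hr
      cases hhd : tg.head with
      | none =>
        obtain ⟨x₀, hx₀⟩ := exists_copy hS hk a.2
        obtain ⟨τ, t1, t2, t3⟩ := hkey x₀ hx₀
        have hIb : tg.body.Eval I (fun i => τ (Sum.inl i)) :=
          ⟨τ, fun i => rfl, fun p hp => t1 _ _ hp, fun t ht => t2 _ _ _ ht⟩
        have hSat := hI tg htg _ hIb
        rw [hhd] at hSat
        exact hSat
      | some ψ =>
        have hwit : ∀ x : LKElem D S l k, IsCopyLK x a.1 →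
            ∃ hh : Fin tg.n ⊕ ψ.V → Δ,
              (∀ i, hh (Sum.inl i) = φ x) ∧
              (∀ p ∈ ψ.cnAtoms, I.cn p.1 (hh p.2)) ∧
              (∀ t ∈ ψ.rnAtoms, I.rn t.1 (hh t.2.1) (hh t.2.2)) := by
          intro x hx
          obtain ⟨τ, t1, t2, t3⟩ := hkey x hx
          have hIb : tg.body.Eval I (fun i => τ (Sum.inl i)) :=
            ⟨τ, fun i => rfl, fun p hp => t1 _ _ hp, fun t ht => t2 _ _ _ ht⟩
          have hSat := hI tg htg _ hIb
          rw [hhd] at hSat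
          obtain ⟨hh, hh1, hh2, hh3⟩ := hSat
          refine ⟨hh, ?_, hh2, hh3⟩
          intro i
          rw [hh1 i]
          show τ (Sum.inl i) = φ x
          rw [hiall i]
          exact t3
        choose HH hh1 hh2 hh3 using hwit
        show ψ.Eval (guided g) vv
        refine ⟨fun w => Sum.rec (fun _ => Sum.inr (Sum.inl (a, φ)))
          (fun y => Sum.inr (Sum.inl (a, fun x =>
            if hx : IsCopyLK x a.1 then HH x hx (Sum.inr y) else δ₀))) w, ?_, ?_, ?_⟩
        · intro i
          show Sum.inr (Sum.inl (a, φ)) = vv i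
          rw [hiall i, ← hv0, he]
        · rintro ⟨c, i | y⟩ hp
          · intro x hx
            have := hh2 x hx _ hp
            rwa [hh1 x hx i] at this
          · intro x hx
            simp only [dif_pos hx]
            exact hh2 x hx _ hp
        · rintro ⟨r, i | y, j | y'⟩ ht
          · refine ⟨rfl, fun x hx => ?_⟩
            have := hh3 x hx _ ht
            rwa [hh1 x hx i, hh1 x hx j] at this
          · refine ⟨rfl, fun x hx => ?_⟩
            have := hh3 x hx _ ht
            rw [hh1 x hx i] at this
            simpa [dif_pos hx] using this
          · refine ⟨rfl, fun x hx => ?_⟩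
            have := hh3 x hx _ ht
            rw [hh1 x hx j] at this
            simpa [dif_pos hx] using this
          · refine ⟨rfl, fun x hx => ?_⟩
            have := hh3 x hx _ ht
            simpa [dif_pos hx] using this
    · -- frontier maps to the Δ-part
      obtain ⟨σ, c1, c2, c4⟩ := plain
      have hσ0 : σ (Sum.inl i₀) = δ := c4 _ δ he
      have hIb : tg.body.Eval I (fun i => σ (Sum.inl i)) :=
        ⟨σ, fun i => rfl, fun p hp => c1 _ _ hp, fun t ht => c2 _ _ _ ht⟩
      have hSat := hI tg htg _ hIb
      cases hhd : tg.head with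
      | none =>
        rw [hhd] at hSat
        exact hSat
      | some ψ =>
        rw [hhd] at hSat
        obtain ⟨hh, hh1, hh2, hh3⟩ := hSat
        have hhv : ∀ i, hh (Sum.inl i) = δ := by
          intro i
          rw [hh1 i]
          show σ (Sum.inl i) = δ
          rw [hiall i]
          exact hσ0
        show ψ.Eval (guided g) vv
        refine ⟨fun w => Sum.rec (fun _ => Sum.inr (Sum.inr δ))
          (fun y => Sum.inr (Sum.inr (hh (Sum.inr y)))) w, ?_, ?_, ?_⟩
        · intro i
          show Sum.inr (Sum.inr δ) = vv i
          rw [hiall i, ← hv0, he]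
        · rintro ⟨c, i | y⟩ hp
          · show I.cn c δ
            have := hh2 _ hp
            rwa [hhv i] at this
          · exact hh2 _ hp
        · rintro ⟨r, i | y, j | y'⟩ ht
          · show I.rn r δ δ
            have := hh3 _ ht
            rwa [hhv i, hhv j] at this
          · show I.rn r δ (hh (Sum.inr y'))
            have := hh3 _ ht
            rwa [hhv i] at this
          · show I.rn r (hh (Sum.inr y)) δ
            have := hh3 _ ht
            rwa [hhv j] at this
          · exact hh3 _ ht
  · -- no frontier variable
    obtain ⟨σ, c1, c2, c4⟩ := plain
    have hIb : tg.body.Eval I (fun i => σ (Sum.inl i)) :=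
      ⟨σ, fun i => rfl, fun p hp => c1 _ _ hp, fun t ht => c2 _ _ _ ht⟩
    have hSat := hI tg htg _ hIb
    cases hhd : tg.head with
    | none =>
      rw [hhd] at hSat
      exact hSat
    | some ψ =>
      rw [hhd] at hSat
      obtain ⟨hh, hh1, hh2, hh3⟩ := hSat
      show ψ.Eval (guided g) vv
      refine ⟨fun w => Sum.rec (fun i => (hB ⟨i⟩).elim)
        (fun y => Sum.inr (Sum.inr (hh (Sum.inr y)))) w, ?_, ?_, ?_⟩
      · intro i
        exact (hB ⟨i⟩).elim
      · rintro ⟨c, i | y⟩ hp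
        · exact (hB ⟨i⟩).elim
        · exact hh2 _ hp
      · rintro ⟨r, i | y, j | y'⟩ ht
        · exact (hB ⟨i⟩).elim
        · exact (hB ⟨i⟩).elim
        · exact (hB ⟨j⟩).elim
        · exact hh3 _ ht
end Saturation

end Stmt7
/-- for an OMQ `(O, Σ, q)` with `O` a possibly infinite set of
frontier-one TGDs with bodies of treewidth `(ℓ,k)` and `q` a CQ of treewidth
`(ℓ,k)`, certain answers on a Σ-database `D` coincide with certain answers on
the `(ℓ,k)`-unraveling of `D` up to `t`. -/
theorem stmt7 {C R A : Type} {m : ℕ} (O : Set (TGD C R))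
    (SC : Set C) (SR : Set R) (q : CQ C R m)
    (l k : ℕ) (h1 : 1 ≤ l) (h2 : l < k)
    (hO : ∀ tg ∈ O, tg.n ≤ 1 ∧ HasTW tg.body.canon l k)
    (hq : q.HasTWq l k)
    (D : Interp C R A) (hfin : D.FiniteFacts) (hsig : D.InSig SC SR)
    (t : Fin m → A) (ht : ∀ i, t i ∈ D.adom) :
    Certain (fun _ I => ModelsTGDSet I O) D (fun _ I v => q.Eval I v) t ↔
    Certain (fun _ I => ModelsTGDSet I O) (unravelLK D (Set.range t) l k)
      (fun _ I v => q.Eval I v) (fun i => Sum.inl (t i)) := by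
  classical
  have hS : Set.range t ⊆ D.adom := by
    rintro a ⟨i, rfl⟩
    exact ht i
  have hk : 1 ≤ k := le_trans h1 (le_of_lt h2)
  constructor
  · -- certain on D implies certain on the unraveling
    intro hc Δ hne I hI g
    obtain ⟨δ₀⟩ := hne
    have hGI := Stmt7.guidedModels hS h1 h2 δ₀ O hO hI g
    have hq' := hc (Stmt7.Om D (Set.range t) l k Δ)
      ⟨Sum.inr (Sum.inr δ₀)⟩ (Stmt7.guided g) hGI (Stmt7.guidedHom g δ₀)
    obtain ⟨h, hfr0, hcn, hrn⟩ := hq'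
    have hfc : ∀ c z, q.canon.cn c z → (Stmt7.guided g).cn c (h z) :=
      fun c z hz => hcn (c, z) hz
    have hfrn : ∀ r z z', q.canon.rn r z z' → (Stmt7.guided g).rn r (h z) (h z') :=
      fun r z z' hz => hrn (r, z, z') hz
    obtain ⟨td⟩ := hq
    obtain ⟨r₀⟩ := td.conn.nonempty
    have hval : ∀ i : Fin m, h (Sum.inl i) = Sum.inl (⟨t i, ht i⟩ : {a : A // a ∈ D.adom}) := by
      intro i
      rw [hfr0 i]
      show (Stmt7.guidedHom g δ₀).toFun (t i) = _
      simp only [Stmt7.guidedHom, dif_pos (ht i)]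
    have hQpar : ∀ z, z ∉ Set.range (Sum.inr : q.V → Fin m ⊕ q.V) →
        ∃ s : {a : A // a ∈ D.adom}, s.1 ∈ Set.range t ∧ h z = Sum.inl s := by
      intro z hz
      rcases z with i | y
      · exact ⟨⟨t i, ht i⟩, ⟨i, rfl⟩, hval i⟩
      · exact absurd ⟨y, rfl⟩ hz
    obtain ⟨σ, c1, c2, c3, c4, c5⟩ := Stmt7.transfer hS hk g h hfc hfrn hQpar td r₀
      (LKSeq.first _ (Stmt7.seqOk_pfa hS (td.bagFin r₀) (td.bagCard r₀))) subset_rfl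
    refine ⟨σ, ?_, fun p hp => c1 _ _ hp, fun tt htt => c2 _ _ _ htt⟩
    intro i
    exact c3 (Sum.inl i) ⟨t i, ht i⟩ ⟨i, rfl⟩ (hval i)
  · -- certain on the unraveling implies certain on D
    intro hc Δ hne I hI hD
    exact hc Δ hne I hI
      { toFun := fun x => hD.toFun (uncopyLK x)
        map_cn := fun c x hx =>
          hD.map_cn _ _ ((Stmt7.uncopyHom D (Set.range t) l k).map_cn c x hx)
        map_rn := fun r x y hxy =>
          hD.map_rn _ _ _ ((Stmt7.uncopyHom D (Set.range t) l k).map_rn r x y hxy) }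
end

section
/- Let O = {⊤ ⊑ A₁ ⊔ A₂} ∪ O' where O' is an ELI ontology and A₁, A₂ are concept names. Let O₁ = {⊤ ⊑ A₁} ∪ O' and O₂ = {⊤ ⊑ A₂} ∪ O'. Then {O₁, O₂} is an exhaustive ELI_⊥-approximation set for O: (i) O₁ ⊨ O and O₂ ⊨ O, and (ii) for every ELI_⊥ ontology O'' with O'' ⊨ O, either O'' ⊨ O₁ or O'' ⊨ O₂. -/
set_option autoImplicit false

attribute [local instance] Classical.propDecidable

/-- Binary direct product of interpretations. -/
def prod2 {C R Δ₁ Δ₂ : Type} (I : Interp C R Δ₁) (J : Interp C R Δ₂) :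
    Interp C R (Δ₁ × Δ₂) where
  cn c p := I.cn c p.1 ∧ J.cn c p.2
  rn r p q := I.rn r p.1 q.1 ∧ J.rn r p.2 q.2

lemma prod2_roleE {C R Δ₁ Δ₂ : Type} (I : Interp C R Δ₁) (J : Interp C R Δ₂)
    (ρ : R ⊕ R) (p q : Δ₁ × Δ₂) :
    (prod2 I J).roleE ρ p q ↔ I.roleE ρ p.1 q.1 ∧ J.roleE ρ p.2 q.2 := by
  cases ρ <;> rfl

lemma prod2_sem {C R Δ₁ Δ₂ : Type} (I : Interp C R Δ₁) (J : Interp C R Δ₂)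
    (X : ELIU C R) (hd : X.disjFree) (hu : X.uFree) (p : Δ₁ × Δ₂) :
    X.sem (prod2 I J) p ↔ X.sem I p.1 ∧ X.sem J p.2 := by
  induction X generalizing p with
  | top => simp [ELIU.sem]
  | bot => simp [ELIU.sem]
  | cn c => rfl
  | inter X Y ihX ihY =>
      simp only [ELIU.sem, ihX hd.1 hu.1, ihY hd.2 hu.2]; tauto
  | union X Y ihX ihY => exact absurd hd (by simp [ELIU.disjFree])
  | exR ρ X ih =>
      constructor
      · rintro ⟨b, hr, hb⟩
        rw [prod2_roleE] at hr
        rw [ih hd hu] at hb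
        exact ⟨⟨b.1, hr.1, hb.1⟩, ⟨b.2, hr.2, hb.2⟩⟩
      · rintro ⟨⟨b₁, hr₁, hb₁⟩, ⟨b₂, hr₂, hb₂⟩⟩
        exact ⟨(b₁, b₂), (prod2_roleE I J ρ p (b₁, b₂)).2 ⟨hr₁, hr₂⟩,
          (ih hd hu (b₁, b₂)).2 ⟨hb₁, hb₂⟩⟩
  | exU X ih => exact absurd hu (by simp [ELIU.uFree])

/-- for `O = {⊤ ⊑ A₁ ⊔ A₂} ∪ O'` with `O'` an ELI ontology,
`{O₁, O₂}` with `Oᵢ = {⊤ ⊑ Aᵢ} ∪ O'` is an exhaustive `ELI_⊥`-approximation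
set for `O`: (i) `O₁ ⊨ O` and `O₂ ⊨ O`, and (ii) every `ELI_⊥` ontology `O''`
with `O'' ⊨ O` satisfies `O'' ⊨ O₁` or `O'' ⊨ O₂`. -/
theorem stmt11 {C R : Type} (A1 A2 : C) (O' : Set (ELIU C R × ELIU C R))
    (hO' : ∀ p ∈ O', ELICI p) (hfin : O'.Finite) :
    (EntailsELIU (insert (ELIU.top, ELIU.cn A1) O')
        (insert (ELIU.top, ELIU.union (ELIU.cn A1) (ELIU.cn A2)) O') ∧
     EntailsELIU (insert (ELIU.top, ELIU.cn A2) O')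
        (insert (ELIU.top, ELIU.union (ELIU.cn A1) (ELIU.cn A2)) O')) ∧
    (∀ O'' : Set (ELIU C R × ELIU C R), (∀ p ∈ O'', ELIbotCI p) → O''.Finite →
      EntailsELIU O''
        (insert (ELIU.top, ELIU.union (ELIU.cn A1) (ELIU.cn A2)) O') →
      (EntailsELIU O'' (insert (ELIU.top, ELIU.cn A1) O') ∨
       EntailsELIU O'' (insert (ELIU.top, ELIU.cn A2) O'))) := by
  constructor
  · constructor <;>
    · intro Δ hΔ I hI p hp a h1
      rcases hp with hp | hp
      · subst hp
        have := hI (ELIU.top, ELIU.cn _) (Set.mem_insert _ _) a trivial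
        first
        | exact Or.inl this
        | exact Or.inr this
      · exact hI p (Set.mem_insert_iff.2 (Or.inr hp)) a h1
  · intro O'' hwf _ hent
    by_contra hcon
    push_neg at hcon
    obtain ⟨h1, h2⟩ := hcon
    -- extract countermodels
    simp only [EntailsELIU, not_forall] at h1 h2
    obtain ⟨Δ₁, hΔ₁, I₁, hI₁, hIn₁⟩ := h1
    obtain ⟨Δ₂, hΔ₂, I₂, hI₂, hIn₂⟩ := h2
    obtain ⟨hΔ₁⟩ := hΔ₁; obtain ⟨hΔ₂⟩ := hΔ₂
    have hO1 : ModelsELIUOnt I₁ (insert (ELIU.top, ELIU.union (ELIU.cn A1) (ELIU.cn A2)) O') :=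
      hent Δ₁ ⟨hΔ₁⟩ I₁ hI₁
    have hO2 : ModelsELIUOnt I₂ (insert (ELIU.top, ELIU.union (ELIU.cn A1) (ELIU.cn A2)) O') :=
      hent Δ₂ ⟨hΔ₂⟩ I₂ hI₂
    -- the violated CI must be ⊤ ⊑ Aᵢ
    have ha : ∃ a : Δ₁, ¬ I₁.cn A1 a := by
      by_contra hno
      push_neg at hno
      apply hIn₁
      intro p hp a hpa
      rcases hp with hp | hp
      · subst hp; exact hno a
      · exact hO1 p (Set.mem_insert_iff.2 (Or.inr hp)) a hpa
    have hb : ∃ b : Δ₂, ¬ I₂.cn A2 b := by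
      by_contra hno
      push_neg at hno
      apply hIn₂
      intro p hp a hpa
      rcases hp with hp | hp
      · subst hp; exact hno a
      · exact hO2 p (Set.mem_insert_iff.2 (Or.inr hp)) a hpa
    obtain ⟨a, ha⟩ := ha
    obtain ⟨b, hb⟩ := hb
    -- product model
    have hP : ModelsELIUOnt (prod2 I₁ I₂) O'' := by
      intro p hp x hx
      obtain ⟨hd1, hu1, hd2, hu2⟩ := hwf p hp
      rw [prod2_sem _ _ _ hd1 hu1] at hx
      rw [prod2_sem _ _ _ hd2 hu2]
      exact ⟨hI₁ p hp x.1 hx.1, hI₂ p hp x.2 hx.2⟩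
    have := hent (Δ₁ × Δ₂) ⟨(a, b)⟩ (prod2 I₁ I₂) hP
      (ELIU.top, ELIU.union (ELIU.cn A1) (ELIU.cn A2)) (Set.mem_insert _ _) (a, b) trivial
    rcases this with h | h
    · exact ha h.1
    · exact hb h.2
end
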